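/- arXiv:0806.2640 — 3 statements merged into one kernel-verified Lean document; each statement's English description precedes it below -/
import Mathlib

section
/- Let K_i : 𝔻^N × 𝔻^N → ℂ be positive definite kernels satisfying, for a function f with |f| ≤ 1 on 𝔻^N, the identity 1 - f(z) conj(f(w)) = ∑_{i=1}^N (1 - z_i conj(w_i)) K_i(z,w). Then for all z, w ∈ 𝔻^N and each i, |K_i(z,w)|^2 ≤ 1 / ((1 - |z_i|^2)(1 - |w_i|^2)). In particular each K_i is bounded on (r𝔻)^N × (r𝔻)^N for every 0 < r < 1. -/
open Complex Finset ComplexOrder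

/-- A kernel `K : D → D → ℂ` is positive definite if every finite Gram matrix is
positive semidefinite, equivalently all quadratic forms are nonnegative. -/
def IsPosDefKernel {D : Type*} (K : D → D → ℂ) : Prop :=
  ∀ (n : ℕ) (z : Fin n → D) (c : Fin n → ℂ),
    0 ≤ ∑ i, ∑ j, starRingEnd ℂ (c i) * c j * K (z i) (z j)

/-- The open unit polydisk in `ℂ^N`. -/
def Polydisk (N : ℕ) : Type := {z : Fin N → ℂ // ∀ i, ‖z i‖ < 1}

lemma diag_nonneg' {D : Type*} {K : D → D → ℂ} (h : IsPosDefKernel K) (x : D) :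
    0 ≤ K x x := by
  have := h 1 ![x] ![1]
  simpa using this

lemma herm' {D : Type*} {K : D → D → ℂ} (h : IsPosDefKernel K) (x y : D) :
    K y x = starRingEnd ℂ (K x y) := by
  have hxx := diag_nonneg' h x
  have hyy := diag_nonneg' h y
  have h1 := h 2 ![x, y] ![1, 1]
  have h2 := h 2 ![x, y] ![1, Complex.I]
  simp [Fin.sum_univ_two] at h1 h2
  rw [Complex.le_def] at h1 h2 hxx hyy
  simp at h1 h2 hxx hyy
  apply Complex.ext <;> simp [Complex.conj_re, Complex.conj_im] <;>
    linarith [h1.2, h2.2, hxx.2, hyy.2]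

lemma cs' {D : Type*} {K : D → D → ℂ} (h : IsPosDefKernel K) (x y : D) :
    ‖K x y‖ ^ 2 ≤ (K x x).re * (K y y).re := by
  have hxx := diag_nonneg' h x
  have hyy := diag_nonneg' h y
  rw [Complex.le_def] at hxx hyy
  simp at hxx hyy
  set a := (K x x).re with ha
  set d := (K y y).re with hd
  set b := K x y with hb
  have hq : ∀ s : ℝ, 0 ≤ a * s ^ 2 - 2 * s * Complex.normSq b + Complex.normSq b * d := by
    intro s
    have := h 2 ![x, y] ![(s : ℂ), -(starRingEnd ℂ b)]
    simp only [Fin.sum_univ_two, Matrix.cons_val_zero, Matrix.cons_val_one, Matrix.head_cons] at this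
    rw [herm' h x y] at this
    rw [Complex.le_def] at this
    have hre := this.1
    have hxxim : (K x x).im = 0 := hxx.2.symm
    have hyyim : (K y y).im = 0 := hyy.2.symm
    simp [Complex.normSq_apply, Complex.mul_re, Complex.mul_im, Complex.conj_re,
      Complex.conj_im, hxxim, hyyim] at hre ⊢
    nlinarith [hre]
  rw [Complex.sq_norm]
  set B := Complex.normSq b with hB
  have hB0 : 0 ≤ B := Complex.normSq_nonneg b
  by_cases hB' : B = 0
  · rw [hB']; exact mul_nonneg hxx.1 hyy.1
  · have hBpos : 0 < B := lt_of_le_of_ne hB0 (Ne.symm hB')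
    by_cases ha0 : a = 0
    · have := hq (d + 1)
      nlinarith
    · have hap : 0 < a := lt_of_le_of_ne hxx.1 (Ne.symm ha0)
      have this1 := hq (B / a)
      have e1 : a * (B / a) ^ 2 = B ^ 2 / a := by field_simp
      have e2 : 2 * (B / a) * B = 2 * (B ^ 2 / a) := by field_simp
      rw [e1, e2] at this1
      have h3 : B ^ 2 / a ≤ B * d := by linarith
      have h4 : B ^ 2 ≤ B * d * a := (div_le_iff₀ hap).mp h3
      nlinarith [h4, hBpos]

lemma diag_bound {N : ℕ}
    (K : Fin N → Polydisk N → Polydisk N → ℂ) (f : Polydisk N → ℂ)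
    (hf : ∀ z, ‖f z‖ ≤ 1)
    (hfact : ∀ z w : Polydisk N,
      1 - f z * starRingEnd ℂ (f w) =
        ∑ i, (1 - z.1 i * starRingEnd ℂ (w.1 i)) * K i z w)
    (hK : ∀ i, IsPosDefKernel (K i)) (z : Polydisk N) (i : Fin N) :
    (1 - ‖z.1 i‖ ^ 2) * (K i z z).re ≤ 1 := by
  have h := hfact z z
  have hre : 1 - Complex.normSq (f z) =
      ∑ j, (1 - Complex.normSq (z.1 j)) * (K j z z).re := by
    have e : ∀ j : Fin N, (1 - z.1 j * starRingEnd ℂ (z.1 j)) * K j z z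
        = ((1 - Complex.normSq (z.1 j) : ℝ) : ℂ) * K j z z := by
      intro j; rw [Complex.mul_conj]; push_cast; ring
    simp_rw [e, Complex.mul_conj] at h
    have := congrArg Complex.re h
    simpa [Complex.re_sum, Complex.re_ofReal_mul] using this
  have hterm_nonneg : ∀ j, 0 ≤ (1 - Complex.normSq (z.1 j)) * (K j z z).re := by
    intro j
    have h1 : Complex.normSq (z.1 j) < 1 := by
      rw [← Complex.sq_norm]
      have := z.2 j
      nlinarith [norm_nonneg (z.1 j)]
    have h2 := diag_nonneg' (hK j) z
    rw [Complex.le_def] at h2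
    exact mul_nonneg (by linarith) h2.1
  have hsum : ∑ j, (1 - Complex.normSq (z.1 j)) * (K j z z).re ≤ 1 := by
    rw [← hre]
    nlinarith [Complex.normSq_nonneg (f z)]
  have hsingle := Finset.single_le_sum (f := fun j => (1 - Complex.normSq (z.1 j)) * (K j z z).re)
    (fun j _ => hterm_nonneg j) (Finset.mem_univ i)
  rw [Complex.sq_norm]
  exact le_trans (by simpa using hsingle) hsum

theorem offdiagonal_bound {N : ℕ}
    (K : Fin N → Polydisk N → Polydisk N → ℂ) (f : Polydisk N → ℂ)
    (hf : ∀ z, ‖f z‖ ≤ 1)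
    (hfact : ∀ z w : Polydisk N,
      1 - f z * starRingEnd ℂ (f w) =
        ∑ i, (1 - z.1 i * starRingEnd ℂ (w.1 i)) * K i z w)
    (hK : ∀ i, IsPosDefKernel (K i)) :
    ∀ (z w : Polydisk N) (i : Fin N),
      ‖K i z w‖ ^ 2 ≤
        1 / ((1 - ‖z.1 i‖ ^ 2) * (1 - ‖w.1 i‖ ^ 2)) := by
  intro z w i
  have hz : 0 < 1 - ‖z.1 i‖ ^ 2 := by
    nlinarith [z.2 i, norm_nonneg (z.1 i)]
  have hw : 0 < 1 - ‖w.1 i‖ ^ 2 := by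
    nlinarith [w.2 i, norm_nonneg (w.1 i)]
  have hdz := diag_bound K f hf hfact hK z i
  have hdw := diag_bound K f hf hfact hK w i
  have hza : (K i z z).re ≤ 1 / (1 - ‖z.1 i‖ ^ 2) := by
    rw [le_div_iff₀ hz]; linarith
  have hwa : (K i w w).re ≤ 1 / (1 - ‖w.1 i‖ ^ 2) := by
    rw [le_div_iff₀ hw]; linarith
  have hzn : 0 ≤ (K i z z).re := by
    have := diag_nonneg' (hK i) z; rw [Complex.le_def] at this; exact this.1
  have hwn : 0 ≤ (K i w w).re := by
    have := diag_nonneg' (hK i) w; rw [Complex.le_def] at this; exact this.1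
  calc ‖K i z w‖ ^ 2 ≤ (K i z z).re * (K i w w).re := cs' (hK i) z w
    _ ≤ (1 / (1 - ‖z.1 i‖ ^ 2)) * (1 / (1 - ‖w.1 i‖ ^ 2)) := by
        apply mul_le_mul hza hwa hwn (by positivity)
    _ = 1 / ((1 - ‖z.1 i‖ ^ 2) * (1 - ‖w.1 i‖ ^ 2)) := by
        rw [one_div_mul_one_div]
end

section
/- Let T = (T_1,…,T_N) be a commuting N-tuple of strict contractions (‖T_i‖ < 1) on a Hilbert space H, and suppose there are polynomial matrices (or scalar polynomials) f, f_1,…,f_N and a polynomial f_0 and constant δ > 0 such that 1 - f(z) conj(f(w)) = δ + f_0(z) conj(f_0(w)) + ∑_{i=1}^N (1 - z_i conj(w_i)) f_i(z) conj(f_i(w)) as a polynomial identity in z and conj(w). Then I - f(T) f(T)^* = δ I + f_0(T) f_0(T)^* + ∑_{i=1}^N f_i(T) (I - T_i T_i^*) f_i(T)^*, and consequently ‖f(T)‖ ≤ √(1 - δ). -/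
open Complex Finset MvPolynomial ContinuousLinearMap

/-- `T^I = T_1^{i_1} ⋯ T_N^{i_N}` for a tuple of operators and a multi-index. -/
noncomputable def opPow {H : Type*} [NormedAddCommGroup H] [NormedSpace ℂ H]
    {N : ℕ} (T : Fin N → H →L[ℂ] H) (I : Fin N → ℕ) : H →L[ℂ] H :=
  (List.ofFn fun i => (T i) ^ (I i)).prod

/-- Evaluation of a polynomial in `N` variables at a commuting tuple of operators. -/
noncomputable def evalOp {H : Type*} [NormedAddCommGroup H] [NormedSpace ℂ H]
    {N : ℕ} (T : Fin N → H →L[ℂ] H) (q : MvPolynomial (Fin N) ℂ) : H →L[ℂ] H :=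
  ∑ I ∈ q.support, q.coeff I • opPow T (fun i => I i)

section Aux
variable {H : Type*} [NormedAddCommGroup H] [NormedSpace ℂ H]

lemma evalOp_sum_def {N : ℕ} (T : Fin N → H →L[ℂ] H) (q : MvPolynomial (Fin N) ℂ) :
    evalOp T q = (AddMonoidAlgebra.coeff q).sum fun I c => c • opPow T fun i => I i := rfl

lemma evalOp_add {N : ℕ} (T : Fin N → H →L[ℂ] H) (p q : MvPolynomial (Fin N) ℂ) :
    evalOp T (p + q) = evalOp T p + evalOp T q := by
  rw [evalOp_sum_def, evalOp_sum_def, evalOp_sum_def]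
  exact Finsupp.sum_add_index' (fun I => zero_smul _ _) (fun I b c => add_smul _ _ _)

lemma evalOp_monomial {N : ℕ} (T : Fin N → H →L[ℂ] H) (I : Fin N →₀ ℕ) (c : ℂ) :
    evalOp T (monomial I c) = c • opPow T fun i => I i := by
  classical
  rcases eq_or_ne c 0 with rfl | hc
  · simp [evalOp, support_monomial]
  · simp [evalOp, support_monomial, hc, coeff_monomial]

lemma opPow_zero {N : ℕ} (T : Fin N → H →L[ℂ] H) : opPow T (fun _ => 0) = 1 := by
  simp [opPow, List.ofFn_const]

lemma evalOp_one {N : ℕ} (T : Fin N → H →L[ℂ] H) : evalOp T 1 = 1 := by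
  have : (1 : MvPolynomial (Fin N) ℂ) = monomial 0 1 := by simp
  rw [this, evalOp_monomial]
  simp [opPow_zero]

lemma commute_opPow {N : ℕ} (T : Fin N → H →L[ℂ] H) (a : H →L[ℂ] H)
    (h : ∀ i, Commute a (T i)) (I : Fin N → ℕ) : Commute a (opPow T I) := by
  refine Commute.list_prod_right _ _ ?_
  intro x hx
  rw [List.mem_ofFn] at hx
  obtain ⟨i, rfl⟩ := hx
  exact (h i).pow_right _

lemma opPow_succ {n : ℕ} (T : Fin (n+1) → H →L[ℂ] H) (K : Fin (n+1) → ℕ) :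
    opPow T K = T 0 ^ K 0 * opPow (fun i : Fin n => T i.succ) (fun i => K i.succ) := by
  simp [opPow, List.ofFn_succ]

lemma opPow_add : ∀ {n : ℕ} (T : Fin n → H →L[ℂ] H),
    (∀ i j, Commute (T i) (T j)) → ∀ I J : Fin n → ℕ,
    opPow T (fun i => I i + J i) = opPow T I * opPow T J := by
  intro n
  induction n with
  | zero => intro T h I J; simp [opPow]
  | succ n ih =>
    intro T h I J
    rw [opPow_succ, opPow_succ T I, opPow_succ T J,
      ih (fun i => T i.succ) (fun i j => h _ _) (fun i => I i.succ) (fun i => J i.succ),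
      pow_add]
    have c1 : Commute (T 0 ^ J 0) (opPow (fun i : Fin n => T i.succ) fun i => I i.succ) :=
      commute_opPow _ _ (fun i => (h 0 i.succ).pow_left _) _
    rw [mul_assoc (T 0 ^ I 0), ← mul_assoc (T 0 ^ J 0), c1.eq, mul_assoc]
    exact (mul_assoc _ _ _).symm

lemma opPow_single : ∀ {n : ℕ} (T : Fin n → H →L[ℂ] H) (i : Fin n),
    opPow T (fun j => if i = j then 1 else 0) = T i := by
  intro n
  induction n with
  | zero => intro T i; exact i.elim0
  | succ n ih =>
    intro T i
    rw [opPow_succ]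
    induction i using Fin.cases with
    | zero =>
      have : (fun j : Fin n => if (0 : Fin (n+1)) = j.succ then 1 else 0) = fun _ => 0 := by
        funext j; simp [Fin.succ_ne_zero j |>.symm]
      rw [this, opPow_zero]
      simp
    | succ k =>
      have : (fun j : Fin n => if k.succ = j.succ then 1 else 0) = fun j => if k = j then 1 else 0 := by
        funext j; simp [Fin.succ_inj]
      rw [this, ih (fun i => T i.succ) k]
      simp [Fin.succ_ne_zero k |>.symm, (Fin.succ_ne_zero k)]

lemma evalOp_X_mul {N : ℕ} (T : Fin N → H →L[ℂ] H) (hcomm : ∀ i j, Commute (T i) (T j))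
    (i : Fin N) (g : MvPolynomial (Fin N) ℂ) :
    evalOp T (X i * g) = T i * evalOp T g := by
  induction g using MvPolynomial.induction_on' with
  | add p q hp hq => rw [mul_add, evalOp_add, evalOp_add, hp, hq, mul_add]
  | monomial J c =>
    rw [show (X i : MvPolynomial (Fin N) ℂ) = monomial (Finsupp.single i 1) 1 from rfl,
      monomial_mul, evalOp_monomial, evalOp_monomial, one_mul]
    have : (fun j => (Finsupp.single i 1 + J : Fin N →₀ ℕ) j) = fun j => (if i = j then 1 else 0) + J j := by
      funext j; simp [Finsupp.single_apply]
    rw [this, opPow_add T hcomm, opPow_single]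
    rw [mul_smul_comm]

lemma commute_evalOp {N : ℕ} (T : Fin N → H →L[ℂ] H) (hcomm : ∀ i j, Commute (T i) (T j))
    (i : Fin N) (g : MvPolynomial (Fin N) ℂ) : Commute (T i) (evalOp T g) := by
  refine Commute.sum_right _ _ _ fun I _ => ?_
  exact (commute_opPow T (T i) (fun j => hcomm i j) _).smul_right _

noncomputable def pairOp {N : ℕ} (T S : Fin N → H →L[ℂ] H)
    (P : MvPolynomial (Fin N ⊕ Fin N) ℂ) : H →L[ℂ] H :=
  ∑ I ∈ P.support, P.coeff I •
    (opPow T (fun i => I (Sum.inl i)) * opPow S (fun i => I (Sum.inr i)))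

lemma pairOp_sum_def {N : ℕ} (T S : Fin N → H →L[ℂ] H) (P : MvPolynomial (Fin N ⊕ Fin N) ℂ) :
    pairOp T S P = (AddMonoidAlgebra.coeff P).sum fun I c => c •
      (opPow T (fun i => I (Sum.inl i)) * opPow S (fun i => I (Sum.inr i))) := rfl

lemma pairOp_add {N : ℕ} (T S : Fin N → H →L[ℂ] H) (P Q : MvPolynomial (Fin N ⊕ Fin N) ℂ) :
    pairOp T S (P + Q) = pairOp T S P + pairOp T S Q := by
  rw [pairOp_sum_def, pairOp_sum_def, pairOp_sum_def]
  exact Finsupp.sum_add_index' (fun I => zero_smul _ _) (fun I b c => add_smul _ _ _)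

lemma pairOp_monomial {N : ℕ} (T S : Fin N → H →L[ℂ] H) (I : (Fin N ⊕ Fin N) →₀ ℕ) (c : ℂ) :
    pairOp T S (monomial I c) = c •
      (opPow T (fun i => I (Sum.inl i)) * opPow S (fun i => I (Sum.inr i))) := by
  classical
  rcases eq_or_ne c 0 with rfl | hc
  · simp [pairOp, support_monomial]
  · simp [pairOp, support_monomial, hc, coeff_monomial]

noncomputable def pairOpHom {N : ℕ} (T S : Fin N → H →L[ℂ] H) :
    MvPolynomial (Fin N ⊕ Fin N) ℂ →+ (H →L[ℂ] H) where
  toFun := pairOp T S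
  map_zero' := by simp [pairOp]
  map_add' := pairOp_add T S

lemma pairOpHom_rename_mul {N : ℕ} (T S : Fin N → H →L[ℂ] H)
    (p r : MvPolynomial (Fin N) ℂ) :
    pairOpHom T S (rename Sum.inl p * rename Sum.inr r) = evalOp T p * evalOp S r := by
  induction p using MvPolynomial.induction_on' with
  | add p q hp hq =>
    rw [map_add, add_mul, map_add, hp, hq, evalOp_add, add_mul]
  | monomial I c =>
    induction r using MvPolynomial.induction_on' with
    | add p q hp hq =>
      rw [map_add, mul_add, map_add, hp, hq, evalOp_add, mul_add]
    | monomial J d =>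
      rw [rename_monomial, rename_monomial, monomial_mul]
      show pairOp T S _ = _
      rw [pairOp_monomial, evalOp_monomial, evalOp_monomial]
      have hl : (fun i => (Finsupp.mapDomain Sum.inl I + Finsupp.mapDomain Sum.inr J : (Fin N ⊕ Fin N) →₀ ℕ) (Sum.inl i))
          = fun i => I i := by
        funext i
        rw [Finsupp.add_apply, Finsupp.mapDomain_apply Sum.inl_injective,
          Finsupp.mapDomain_notin_range _ _ (by simp), add_zero]
      have hr : (fun i => (Finsupp.mapDomain Sum.inl I + Finsupp.mapDomain Sum.inr J : (Fin N ⊕ Fin N) →₀ ℕ) (Sum.inr i))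
          = fun i => J i := by
        funext i
        rw [Finsupp.add_apply, Finsupp.mapDomain_apply Sum.inr_injective,
          Finsupp.mapDomain_notin_range _ _ (by simp), zero_add]
      rw [hl, hr, smul_mul_smul_comm]

lemma pairOpHom_one {N : ℕ} (T S : Fin N → H →L[ℂ] H) : pairOpHom T S 1 = 1 := by
  have : (1 : MvPolynomial (Fin N ⊕ Fin N) ℂ) = rename Sum.inl 1 * rename Sum.inr 1 := by simp
  rw [this, pairOpHom_rename_mul, evalOp_one, evalOp_one, one_mul]

lemma pairOpHom_C {N : ℕ} (T S : Fin N → H →L[ℂ] H) (a : ℂ) :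
    pairOpHom T S (C a) = a • 1 := by
  show pairOp T S (monomial 0 a) = a • 1
  rw [pairOp_monomial]
  simp [opPow_zero]

end Aux

section AuxAdj
variable {H : Type*} [NormedAddCommGroup H] [InnerProductSpace ℂ H] [CompleteSpace H]

lemma adjoint_opPow : ∀ {n : ℕ} (T : Fin n → H →L[ℂ] H),
    (∀ i j, Commute (T i) (T j)) → ∀ I : Fin n → ℕ,
    adjoint (opPow T I) = opPow (fun i => adjoint (T i)) I := by
  intro n
  induction n with
  | zero =>
    intro T h I
    show adjoint (List.prod _) = List.prod _
    rw [show (List.ofFn fun i : Fin 0 => (T i) ^ (I i)) = [] from rfl,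
      show (List.ofFn fun i : Fin 0 => (adjoint (T i)) ^ (I i)) = [] from rfl]
    rw [List.prod_nil, ← star_eq_adjoint, star_one]
  | succ n ih =>
    intro T h I
    rw [opPow_succ, opPow_succ (fun i => adjoint (T i)) I, ← star_eq_adjoint, star_mul,
      star_pow, star_eq_adjoint, star_eq_adjoint,
      ih (fun i => T i.succ) (fun i j => h _ _) (fun i => I i.succ)]
    have c1 : Commute ((adjoint (T 0)) ^ I 0)
        (opPow (fun i : Fin n => adjoint (T i.succ)) fun i => I i.succ) := by
      refine (commute_opPow _ _ (fun i => ?_) _)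
      have := (h 0 i.succ).star_star
      rw [star_eq_adjoint, star_eq_adjoint] at this
      exact this.pow_left _
    exact c1.eq.symm

lemma adjoint_evalOp {N : ℕ} (T : Fin N → H →L[ℂ] H) (hcomm : ∀ i j, Commute (T i) (T j))
    (q : MvPolynomial (Fin N) ℂ) :
    adjoint (evalOp T q) =
      evalOp (fun i => adjoint (T i)) (MvPolynomial.map (starRingEnd ℂ) q) := by
  rw [← star_eq_adjoint]
  rw [show evalOp T q = ∑ I ∈ q.support, q.coeff I • opPow T (fun i => I i) from rfl]
  rw [star_sum]
  rw [show evalOp (fun i => adjoint (T i)) (MvPolynomial.map (starRingEnd ℂ) q)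
    = ∑ I ∈ (MvPolynomial.map (starRingEnd ℂ) q).support,
        (MvPolynomial.map (starRingEnd ℂ) q).coeff I •
          opPow (fun i => adjoint (T i)) (fun i => I i) from rfl]
  rw [support_map_of_injective _ (RingHom.injective _)]
  refine Finset.sum_congr rfl fun I _ => ?_
  rw [star_smul, star_eq_adjoint, adjoint_opPow T hcomm, coeff_map]
  rfl
end AuxAdj


set_option maxHeartbeats 2000000

theorem polynomial_factorization_transfer
    {H : Type*} [NormedAddCommGroup H] [InnerProductSpace ℂ H] [CompleteSpace H]
    {N : ℕ} (T : Fin N → H →L[ℂ] H)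
    (hcomm : ∀ i j, Commute (T i) (T j))
    (hT : ∀ i, ‖T i‖ < 1)
    (f f₀ : MvPolynomial (Fin N) ℂ) (fi : Fin N → MvPolynomial (Fin N) ℂ)
    (δ : ℝ) (hδ : 0 < δ)
    (hfact : ∀ z w : Fin N → ℂ,
      1 - MvPolynomial.eval z f * starRingEnd ℂ (MvPolynomial.eval w f) =
        (δ : ℂ) + MvPolynomial.eval z f₀ * starRingEnd ℂ (MvPolynomial.eval w f₀) +
          ∑ i, (1 - z i * starRingEnd ℂ (w i)) *
            (MvPolynomial.eval z (fi i) * starRingEnd ℂ (MvPolynomial.eval w (fi i)))) :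
    (1 - evalOp T f * adjoint (evalOp T f) =
      (δ : ℂ) • (1 : H →L[ℂ] H) + evalOp T f₀ * adjoint (evalOp T f₀) +
        ∑ i, evalOp T (fi i) * (1 - T i * adjoint (T i)) * adjoint (evalOp T (fi i))) ∧
    ‖evalOp T f‖ ≤ Real.sqrt (1 - δ) := by
  classical
  set S : Fin N → H →L[ℂ] H := fun i => adjoint (T i) with hS
  have hcommS : ∀ i j, Commute (S i) (S j) := by
    intro i j
    have := (hcomm i j).star_star
    rwa [star_eq_adjoint, star_eq_adjoint] at this
  -- the polynomial identity in 2N variables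
  have hpoly : (1 : MvPolynomial (Fin N ⊕ Fin N) ℂ)
      - rename Sum.inl f * rename Sum.inr (MvPolynomial.map (starRingEnd ℂ) f)
      = C (δ:ℂ) + rename Sum.inl f₀ * rename Sum.inr (MvPolynomial.map (starRingEnd ℂ) f₀)
      + ∑ i, (1 - X (Sum.inl i) * X (Sum.inr i)) *
          (rename Sum.inl (fi i) * rename Sum.inr (MvPolynomial.map (starRingEnd ℂ) (fi i))) := by
    apply MvPolynomial.funext
    intro v
    have hbar : ∀ q : MvPolynomial (Fin N) ℂ,
        eval v (rename Sum.inr (MvPolynomial.map (starRingEnd ℂ) q)) =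
          starRingEnd ℂ (eval (fun i => starRingEnd ℂ (v (Sum.inr i))) q) := by
      intro q
      rw [eval_rename, eval_map]
      rw [show eval (fun i => starRingEnd ℂ (v (Sum.inr i))) q
         = eval₂ (RingHom.id ℂ) (fun i => starRingEnd ℂ (v (Sum.inr i))) q from (eval₂_id q).symm]
      rw [eval₂_comp_left (starRingEnd ℂ)]
      congr 1
      funext i
      simp [Function.comp]
    have h := hfact (fun i => v (Sum.inl i)) (fun i => starRingEnd ℂ (v (Sum.inr i)))
    simp only [Complex.conj_conj] at h
    simp only [map_sub, map_add, map_mul, map_one, map_sum, eval_rename, hbar, eval_C, eval_X]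
    convert h using 2 <;> rfl
  -- transfer to operators
  have hid : 1 - evalOp T f * adjoint (evalOp T f) =
      (δ : ℂ) • (1 : H →L[ℂ] H) + evalOp T f₀ * adjoint (evalOp T f₀) +
        ∑ i, evalOp T (fi i) * (1 - T i * adjoint (T i)) * adjoint (evalOp T (fi i)) := by
    have h2 := congrArg (pairOpHom T S) hpoly
    rw [map_sub, map_add, map_add, map_sum, pairOpHom_one, pairOpHom_C,
      pairOpHom_rename_mul, pairOpHom_rename_mul] at h2
    rw [← adjoint_evalOp T hcomm f, ← adjoint_evalOp T hcomm f₀] at h2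
    rw [h2]
    congr 1
    refine Finset.sum_congr rfl fun i _ => ?_
    have hterm : (1 - X (Sum.inl i) * X (Sum.inr i)) *
        (rename Sum.inl (fi i) * rename Sum.inr (MvPolynomial.map (starRingEnd ℂ) (fi i)))
        = rename Sum.inl (fi i) * rename Sum.inr (MvPolynomial.map (starRingEnd ℂ) (fi i))
          - rename Sum.inl (X i * fi i) *
            rename Sum.inr (X i * MvPolynomial.map (starRingEnd ℂ) (fi i)) := by
      rw [map_mul, map_mul, rename_X, rename_X]
      ring
    rw [hterm, map_sub, pairOpHom_rename_mul, pairOpHom_rename_mul,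
      evalOp_X_mul T hcomm, evalOp_X_mul S hcommS,
      ← adjoint_evalOp T hcomm (fi i)]
    have hc := (commute_evalOp T hcomm i (fi i)).eq
    rw [mul_sub, mul_one, sub_mul]
    congr 1
    rw [hc]
    simp only [mul_assoc]
    rfl
  refine ⟨hid, ?_⟩
  -- norm bound
  set F := evalOp T f with hF
  set F₀ := evalOp T f₀ with hF₀
  have key : ∀ h : H, (‖h‖:ℂ)^2 - (‖adjoint F h‖:ℂ)^2
      = (δ:ℂ)*(‖h‖:ℂ)^2 + (‖adjoint F₀ h‖:ℂ)^2
        + ∑ i, ((‖adjoint (evalOp T (fi i)) h‖:ℂ)^2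
            - (‖adjoint (T i) (adjoint (evalOp T (fi i)) h)‖:ℂ)^2) := by
    intro h
    have hAA : ∀ A : H →L[ℂ] H, (inner ℂ ((A * adjoint A) h) h : ℂ) = (‖adjoint A h‖:ℂ)^2 := by
      intro A
      rw [ContinuousLinearMap.mul_apply, ← adjoint_inner_right, inner_self_eq_norm_sq_to_K]
      rfl
    have hGi : ∀ i, (inner ℂ ((evalOp T (fi i) * (1 - T i * adjoint (T i))
          * adjoint (evalOp T (fi i))) h) h : ℂ)
        = (‖adjoint (evalOp T (fi i)) h‖:ℂ)^2
          - (‖adjoint (T i) (adjoint (evalOp T (fi i)) h)‖:ℂ)^2 := by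
      intro i
      rw [ContinuousLinearMap.mul_apply, ContinuousLinearMap.mul_apply,
        ← adjoint_inner_right (evalOp T (fi i))]
      rw [ContinuousLinearMap.sub_apply, ContinuousLinearMap.one_apply, inner_sub_left,
        ContinuousLinearMap.mul_apply, ← adjoint_inner_right (T i),
        inner_self_eq_norm_sq_to_K, inner_self_eq_norm_sq_to_K]
      rfl
    have h2 := congrArg (fun A : H →L[ℂ] H => (inner ℂ (A h) h : ℂ)) hid
    simp only [ContinuousLinearMap.sub_apply, ContinuousLinearMap.add_apply,
      ContinuousLinearMap.sum_apply, ContinuousLinearMap.smul_apply,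
      ContinuousLinearMap.one_apply] at h2
    rw [inner_sub_left, inner_add_left, inner_add_left, inner_smul_left, sum_inner] at h2
    rw [hAA F, hAA F₀] at h2
    simp only [hGi] at h2
    rw [inner_self_eq_norm_sq_to_K, Complex.conj_ofReal] at h2
    exact h2
  have keyR : ∀ h : H, ‖adjoint F h‖^2 = (1-δ)*‖h‖^2 - ‖adjoint F₀ h‖^2
      - ∑ i, (‖adjoint (evalOp T (fi i)) h‖^2
          - ‖adjoint (T i) (adjoint (evalOp T (fi i)) h)‖^2) := by
    intro h
    have := key h
    have hre : ‖h‖^2 - ‖adjoint F h‖^2 = δ*‖h‖^2 + ‖adjoint F₀ h‖^2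
        + ∑ i, (‖adjoint (evalOp T (fi i)) h‖^2
            - ‖adjoint (T i) (adjoint (evalOp T (fi i)) h)‖^2) := by
      apply Complex.ofReal_injective
      push_cast
      exact this
    linarith [hre]
  have hbound : ∀ h : H, ‖adjoint F h‖^2 ≤ (1-δ)*‖h‖^2 := by
    intro h
    have h1 : (0:ℝ) ≤ ‖adjoint F₀ h‖^2 := sq_nonneg _
    have h2 : (0:ℝ) ≤ ∑ i, (‖adjoint (evalOp T (fi i)) h‖^2
        - ‖adjoint (T i) (adjoint (evalOp T (fi i)) h)‖^2) := by
      refine Finset.sum_nonneg fun i _ => ?_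
      have hle : ‖adjoint (T i) (adjoint (evalOp T (fi i)) h)‖
          ≤ ‖adjoint (evalOp T (fi i)) h‖ := by
        have := (adjoint (T i)).le_opNorm (adjoint (evalOp T (fi i)) h)
        have hn : ‖adjoint (T i)‖ ≤ 1 := by
          rw [LinearIsometryEquiv.norm_map adjoint (T i)]
          exact (hT i).le
        nlinarith [norm_nonneg (adjoint (evalOp T (fi i)) h)]
      nlinarith [norm_nonneg (adjoint (T i) (adjoint (evalOp T (fi i)) h)),
        norm_nonneg (adjoint (evalOp T (fi i)) h)]
    have h3 := keyR h
    linarith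
  have hFadj : ‖F‖ = ‖adjoint F‖ := (LinearIsometryEquiv.norm_map adjoint F).symm
  rw [hFadj]
  refine ContinuousLinearMap.opNorm_le_bound _ (Real.sqrt_nonneg _) fun h => ?_
  rcases le_or_gt 0 (1 - δ) with hpos | hneg
  · have : ‖adjoint F h‖ = Real.sqrt (‖adjoint F h‖^2) := (Real.sqrt_sq (norm_nonneg _)).symm
    rw [this]
    calc Real.sqrt (‖adjoint F h‖^2) ≤ Real.sqrt ((1-δ)*‖h‖^2) := Real.sqrt_le_sqrt (hbound h)
      _ = Real.sqrt (1-δ) * Real.sqrt (‖h‖^2) := Real.sqrt_mul hpos _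
      _ = Real.sqrt (1-δ) * ‖h‖ := by rw [Real.sqrt_sq (norm_nonneg _)]
  · have h0 : ‖adjoint F h‖ = 0 := by
      have := hbound h
      nlinarith [norm_nonneg (adjoint F h), sq_nonneg ‖h‖, norm_nonneg h]
    rw [h0]
    positivity
end

section
/- Suppose P(z) = C_0 D_1(z) C_1 where C_0 ∈ M_{m,p}(ℂ), C_1 ∈ M_{q,n}(ℂ) are scalar matrices with ‖C_0‖ < 1, ‖C_1‖ < 1, and D_1(z) is a p × q diagonal-type matrix of monomials in a single variable z_j with ‖D_1(z)‖ ≤ 1 for |z_j| ≤ 1. Then there exist a positive definite matrix R ∈ M_m with R ≥ δ I for some δ > 0, and matrices of polynomials P_0 and P_j such that I_m - P(z) P(w)^* = R + P_0(z) P_0(w)^* + (1 - z_j conj(w_j)) P_j(z) P_j(w)^* for all z, w ∈ ℂ^N. -/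
open Complex Matrix ComplexOrder
open scoped Matrix.Norms.L2Operator

lemma lof_mulVec_sq_sum_le {a b : ℕ} (A : Matrix (Fin a) (Fin b) ℂ) (x : Fin b → ℂ) :
    ∑ k, ‖(A *ᵥ x) k‖^2 ≤ ‖A‖^2 * ∑ i, ‖x i‖^2 := by
  have h : √(∑ k : Fin a, ‖(A *ᵥ x) k‖^2) ≤ ‖A‖ * √(∑ i : Fin b, ‖x i‖^2) := by
    have h0 := A.l2_opNorm_mulVec ((EuclideanSpace.equiv (Fin b) ℂ).symm x)
    rw [EuclideanSpace.norm_eq, EuclideanSpace.norm_eq] at h0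
    exact h0
  have hx : (0:ℝ) ≤ ∑ i, ‖x i‖^2 := Finset.sum_nonneg fun _ _ => sq_nonneg _
  have hAx : (0:ℝ) ≤ ∑ k, ‖(A *ᵥ x) k‖^2 := Finset.sum_nonneg fun _ _ => sq_nonneg _
  have hA : (0:ℝ) ≤ ‖A‖ := norm_nonneg _
  nlinarith [Real.sq_sqrt hx, Real.sq_sqrt hAx, Real.sqrt_nonneg (∑ i, ‖x i‖^2),
    Real.sqrt_nonneg (∑ k, ‖(A *ᵥ x) k‖^2)]


lemma lof_star_dot_self {c : ℕ} (v : Fin c → ℂ) :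
    star v ⬝ᵥ v = ((∑ i, ‖v i‖^2 : ℝ) : ℂ) := by
  simp only [dotProduct, Pi.star_apply, Complex.star_def, ofReal_sum]
  refine Finset.sum_congr rfl fun i _ => ?_
  rw [← Complex.normSq_eq_conj_mul_self]
  norm_cast
  rw [Complex.sq_norm]

lemma lof_smul_one_sub_posSemidef {a b : ℕ} (A : Matrix (Fin a) (Fin b) ℂ) :
    (((‖A‖^2 : ℝ) : ℂ) • (1 : Matrix (Fin a) (Fin a) ℂ) - A * Aᴴ).PosSemidef := by
  rw [Matrix.posSemidef_iff_dotProduct_mulVec]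
  constructor
  · unfold Matrix.IsHermitian
    rw [conjTranspose_sub, conjTranspose_smul, conjTranspose_one, conjTranspose_mul,
      conjTranspose_conjTranspose]
    norm_num
  · intro x
    have key : star x ⬝ᵥ ((((‖A‖^2 : ℝ) : ℂ) • (1 : Matrix (Fin a) (Fin a) ℂ) - A * Aᴴ) *ᵥ x)
        = ((‖A‖^2 * ∑ i, ‖x i‖^2 - ∑ k, ‖(Aᴴ *ᵥ x) k‖^2 : ℝ) : ℂ) := by
      rw [sub_mulVec, dotProduct_sub, smul_mulVec, one_mulVec, dotProduct_smul,
        ← mulVec_mulVec, dotProduct_mulVec (star x) A]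
      rw [show star x ᵥ* A = star (Aᴴ *ᵥ x) from by rw [star_mulVec, conjTranspose_conjTranspose]]
      rw [lof_star_dot_self, lof_star_dot_self, ofReal_sub, ofReal_mul]
      push_cast
      rw [smul_eq_mul]
    rw [key, Complex.zero_le_real, sub_nonneg]
    have := lof_mulVec_sq_sum_le Aᴴ x
    rwa [Matrix.l2_opNorm_conjTranspose] at this


lemma lof_diag_factor {p q : ℕ} (D : ℂ → Matrix (Fin p) (Fin q) ℂ)
    (hmono : ∀ k l, (∃ e : ℕ, ∀ z : ℂ, D z k l = z ^ e) ∨ (∀ z : ℂ, D z k l = 0))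
    (hnorm : ‖D 1‖ ≤ 1) :
    ∃ (E : ℕ) (A : ℂ → Matrix (Fin p) (Fin E) ℂ) (Q : Matrix (Fin p) (Fin p) ℂ),
      Q.PosSemidef ∧
      (∀ k c, (∃ e : ℕ, ∀ ζ : ℂ, A ζ k c = ζ ^ e) ∨ (∀ ζ : ℂ, A ζ k c = 0)) ∧
      ∀ ζ ξ : ℂ, (1 : Matrix (Fin p) (Fin p) ℂ) - D ζ * (D ξ)ᴴ
        = Q + (1 - ζ * starRingEnd ℂ ξ) • (A ζ * (A ξ)ᴴ) := by
  classical
  -- entries are controlled monomials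
  have hexp : ∀ k l, ∃ e : ℕ, ∀ ζ : ℂ, D ζ k l = if D 1 k l ≠ 0 then ζ ^ e else 0 := by
    intro k l
    rcases hmono k l with ⟨e, he⟩ | h0
    · exact ⟨e, fun ζ => by rw [he, if_pos (by rw [he 1]; simp)]⟩
    · exact ⟨0, fun ζ => by rw [h0, if_neg (by simp [h0 1])]⟩
  choose ex hex using hexp
  have hone : ∀ k l, D 1 k l ≠ 0 → D 1 k l = 1 := fun k l h => by
    rw [hex k l 1, if_pos h, one_pow]
  -- norm consequences
  have hDle : ‖D 1‖^2 ≤ 1 := by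
    have h0 : (0:ℝ) ≤ ‖D 1‖ := norm_nonneg _
    nlinarith
  have hcol : ∀ (l : Fin q) (k₁ k₂ : Fin p), D 1 k₁ l ≠ 0 → D 1 k₂ l ≠ 0 → k₁ = k₂ := by
    intro l k₁ k₂ h₁ h₂
    by_contra hne
    have hb := lof_mulVec_sq_sum_le (D 1) (Pi.single l 1)
    have hx : ∑ i, ‖(Pi.single l 1 : Fin q → ℂ) i‖^2 = 1 := by
      simp [Pi.single_apply, apply_ite]
    have hmv : ∀ k, (D 1 *ᵥ Pi.single l (1:ℂ)) k = D 1 k l := by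
      intro k; rw [mulVec_single]; simp
    have h2 : (2:ℝ) ≤ ∑ k, ‖(D 1 *ᵥ Pi.single l (1:ℂ)) k‖^2 := by
      have hsub : ({k₁, k₂} : Finset (Fin p)) ⊆ Finset.univ := Finset.subset_univ _
      have := Finset.sum_le_sum_of_subset_of_nonneg hsub
        (fun i _ _ => sq_nonneg ‖(D 1 *ᵥ Pi.single l (1:ℂ)) i‖)
      rw [Finset.sum_pair hne] at this
      have e1 : ‖(D 1 *ᵥ Pi.single l (1:ℂ)) k₁‖ = 1 := by rw [hmv, hone _ _ h₁]; simp
      have e2 : ‖(D 1 *ᵥ Pi.single l (1:ℂ)) k₂‖ = 1 := by rw [hmv, hone _ _ h₂]; simp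
      rw [e1, e2] at this
      rw [show (2:ℝ) = 1^2 + 1^2 by norm_num]
      exact this
    rw [hx] at hb
    nlinarith
  have hrow : ∀ (k : Fin p) (l₁ l₂ : Fin q), D 1 k l₁ ≠ 0 → D 1 k l₂ ≠ 0 → l₁ = l₂ := by
    intro k l₁ l₂ h₁ h₂
    by_contra hne
    have hb := lof_mulVec_sq_sum_le (D 1)ᴴ (Pi.single k 1)
    rw [Matrix.l2_opNorm_conjTranspose] at hb
    have hx : ∑ i, ‖(Pi.single k 1 : Fin p → ℂ) i‖^2 = 1 := by
      simp [Pi.single_apply, apply_ite]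
    have hmv : ∀ l, ((D 1)ᴴ *ᵥ Pi.single k (1:ℂ)) l = starRingEnd ℂ (D 1 k l) := by
      intro l; rw [mulVec_single]; simp [conjTranspose_apply]
    have h2 : (2:ℝ) ≤ ∑ l, ‖((D 1)ᴴ *ᵥ Pi.single k (1:ℂ)) l‖^2 := by
      have hsub : ({l₁, l₂} : Finset (Fin q)) ⊆ Finset.univ := Finset.subset_univ _
      have := Finset.sum_le_sum_of_subset_of_nonneg hsub
        (fun i _ _ => sq_nonneg ‖((D 1)ᴴ *ᵥ Pi.single k (1:ℂ)) i‖)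
      rw [Finset.sum_pair hne] at this
      have e1 : ‖((D 1)ᴴ *ᵥ Pi.single k (1:ℂ)) l₁‖ = 1 := by rw [hmv, hone _ _ h₁]; simp
      have e2 : ‖((D 1)ᴴ *ᵥ Pi.single k (1:ℂ)) l₂‖ = 1 := by rw [hmv, hone _ _ h₂]; simp
      rw [e1, e2] at this
      rw [show (2:ℝ) = 1^2 + 1^2 by norm_num]
      exact this
    rw [hx] at hb
    nlinarith
  -- row data
  set has : Fin p → Prop := fun k => ∃ l, D 1 k l ≠ 0 with hhas
  have hdec : DecidablePred has := fun k => Classical.dec _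
  set ek : Fin p → ℕ := fun k => if h : has k then ex k h.choose else 0 with hek
  have hdiag : ∀ (ζ ξ : ℂ) (k k' : Fin p), (D ζ * (D ξ)ᴴ) k k'
      = if k' = k ∧ has k then (ζ * starRingEnd ℂ ξ) ^ (ek k) else 0 := by
    intro ζ ξ k k'
    rw [Matrix.mul_apply]
    simp only [conjTranspose_apply]
    by_cases hk : has k
    · by_cases hkk : k' = k
      · subst hkk
        rw [if_pos ⟨rfl, hk⟩]
        rw [Finset.sum_eq_single hk.choose]
        · rw [hex k' hk.choose ζ, hex k' hk.choose ξ,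
            if_pos hk.choose_spec, if_pos hk.choose_spec]
          show _ = _ ^ (if h : has k' then ex k' h.choose else 0)
          rw [dif_pos hk, mul_pow]
          rw [show star (ξ ^ ex k' hk.choose) = (starRingEnd ℂ ξ) ^ ex k' hk.choose from by
            rw [← map_pow]; rfl]
        · intro l _ hl
          by_cases h1 : D 1 k' l ≠ 0
          · exact absurd (hrow k' l hk.choose h1 hk.choose_spec) hl
          · rw [hex k' l ζ, if_neg h1, zero_mul]
        · intro h; exact absurd (Finset.mem_univ _) h
      · rw [if_neg (by tauto)]
        apply Finset.sum_eq_zero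
        intro l _
        by_cases h1 : D 1 k l ≠ 0
        · by_cases h2 : D 1 k' l ≠ 0
          · exact absurd (hcol l k' k h2 h1) hkk
          · rw [hex k' l ξ, if_neg h2]
            rw [star_zero, mul_zero]
        · rw [hex k l ζ, if_neg h1, zero_mul]
    · rw [if_neg (by tauto)]
      apply Finset.sum_eq_zero
      intro l _
      have h1 : ¬ (D 1 k l ≠ 0) := fun h => hk ⟨l, h⟩
      rw [hex k l ζ, if_neg h1, zero_mul]
  -- build A
  set EE : ℕ := (Finset.univ.sup ek) + 1 with hEE
  have hlt : ∀ k, ek k < EE := fun k =>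
    lt_of_le_of_lt (Finset.le_sup (Finset.mem_univ k)) (Nat.lt_succ_self _)
  set A0 : ℂ → Matrix (Fin p) (Fin p × Fin EE) ℂ := fun ζ =>
    Matrix.of fun k c => if c.1 = k ∧ has k ∧ (c.2 : ℕ) < ek k then ζ ^ (c.2 : ℕ) else 0
    with hA0def
  have hA0 : ∀ (ζ ξ : ℂ) (k k' : Fin p), (A0 ζ * (A0 ξ)ᴴ) k k'
      = if k' = k ∧ has k then ∑ i ∈ Finset.range (ek k), (ζ * starRingEnd ℂ ξ) ^ i else 0 := by
    intro ζ ξ k k'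
    rw [Matrix.mul_apply]
    simp only [conjTranspose_apply, hA0def, Matrix.of_apply]
    rw [Fintype.sum_prod_type]
    by_cases hkk : k' = k ∧ has k
    · obtain ⟨rfl, hk⟩ := hkk
      rw [if_pos ⟨rfl, hk⟩]
      rw [Finset.sum_eq_single k']
      · have : ∀ i : Fin EE,
            (if k' = k' ∧ has k' ∧ (i : ℕ) < ek k' then ζ ^ (i:ℕ) else 0) *
              star (if k' = k' ∧ has k' ∧ (i : ℕ) < ek k' then ξ ^ (i:ℕ) else 0)
            = if (i : ℕ) < ek k' then (ζ * starRingEnd ℂ ξ) ^ (i:ℕ) else 0 := by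
          intro i
          by_cases hi : (i:ℕ) < ek k'
          · rw [if_pos ⟨rfl, hk, hi⟩, if_pos ⟨rfl, hk, hi⟩, if_pos hi, mul_pow]
            congr 1
            rw [← map_pow]; rfl
          · rw [if_neg (by tauto), if_neg (by tauto), if_neg hi, zero_mul]
        rw [Finset.sum_congr rfl fun i _ => this i]
        rw [Fin.sum_univ_eq_sum_range (fun i => if i < ek k' then (ζ * starRingEnd ℂ ξ) ^ i else 0)]
        rw [← Finset.sum_subset (Finset.range_subset_range.mpr (le_of_lt (hlt k')))
          (fun x _ hx => if_neg (fun hc => hx (Finset.mem_range.mpr hc)))]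
        exact Finset.sum_congr rfl fun i hi => if_pos (Finset.mem_range.mp hi)
      · intro b _ hb
        apply Finset.sum_eq_zero
        intro i _
        rw [if_neg (fun hc => hb hc.1), zero_mul]
      · intro h; exact absurd (Finset.mem_univ _) h
    · rw [if_neg hkk]
      apply Finset.sum_eq_zero
      intro b _
      apply Finset.sum_eq_zero
      intro i _
      by_cases h1 : b = k ∧ has k ∧ (i:ℕ) < ek k
      · rw [if_neg (fun hc : b = k' ∧ has k' ∧ (i:ℕ) < ek k' => hkk ⟨hc.1.symm.trans h1.1, h1.2.1⟩),
          star_zero, mul_zero]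
      · rw [if_neg h1, zero_mul]
  -- assemble
  set Q : Matrix (Fin p) (Fin p) ℂ := Matrix.diagonal (fun k => if has k then 0 else 1) with hQdef
  have hQpsd : Q.PosSemidef := by
    rw [hQdef]
    refine Matrix.posSemidef_diagonal_iff.mpr fun k => ?_
    by_cases hk : has k
    · rw [if_pos hk]
    · rw [if_neg hk]; exact zero_le_one
  have hfac0 : ∀ ζ ξ : ℂ, (1 : Matrix (Fin p) (Fin p) ℂ) - D ζ * (D ξ)ᴴ
      = Q + (1 - ζ * starRingEnd ℂ ξ) • (A0 ζ * (A0 ξ)ᴴ) := by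
    intro ζ ξ
    ext k k'
    rw [Matrix.sub_apply, Matrix.add_apply, Matrix.smul_apply, hdiag ζ ξ k k', hA0 ζ ξ k k',
      smul_eq_mul, hQdef]
    by_cases hkk : k = k'
    · subst hkk
      rw [Matrix.one_apply_eq, Matrix.diagonal_apply_eq]
      split_ifs with h1 h2 h3
      · linear_combination geom_sum_mul (ζ * starRingEnd ℂ ξ) (ek k)
      · exact absurd h1.2 h2
      · exact absurd ⟨rfl, h3⟩ h1
      · ring
    · rw [Matrix.one_apply_ne hkk, Matrix.diagonal_apply_ne _ hkk,
        if_neg (fun h : k' = k ∧ has k => hkk h.1.symm),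
        if_neg (fun h : k' = k ∧ has k => hkk h.1.symm)]
      ring
  -- reindex to Fin (p * EE)
  refine ⟨p * EE, fun ζ => (A0 ζ).submatrix id finProdFinEquiv.symm, Q, hQpsd, ?_, ?_⟩
  · intro k c
    rw [hA0def]
    by_cases hc : (finProdFinEquiv.symm c).1 = k ∧ has k ∧
        ((finProdFinEquiv.symm c).2 : ℕ) < ek k
    · exact Or.inl ⟨((finProdFinEquiv.symm c).2 : ℕ), fun ζ => by
        simp only [Matrix.submatrix_apply, Matrix.of_apply, id_eq]; rw [if_pos hc]⟩
    · exact Or.inr fun ζ => by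
        simp only [Matrix.submatrix_apply, Matrix.of_apply, id_eq]; rw [if_neg hc]
  · intro ζ ξ
    rw [hfac0 ζ ξ]
    congr 1
    congr 1
    rw [conjTranspose_submatrix, Matrix.submatrix_mul_equiv, Matrix.submatrix_id_id]


lemma lof_real_smul_one_psd {c : ℕ} {r : ℝ} (hr : 0 ≤ r) :
    ((r : ℂ) • (1 : Matrix (Fin c) (Fin c) ℂ)).PosSemidef := by
  have : (r : ℂ) • (1 : Matrix (Fin c) (Fin c) ℂ) = Matrix.diagonal (fun _ => (r : ℂ)) := by
    ext k k'
    by_cases h : k = k'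
    · subst h; simp
    · simp [Matrix.one_apply_ne h, Matrix.diagonal_apply_ne _ h]
  rw [this]
  exact Matrix.posSemidef_diagonal_iff.mpr fun _ => by
    exact_mod_cast Complex.zero_le_real.mpr hr

lemma lof_entry_poly {N a b c d : ℕ} (j : Fin N) (M : ℂ → Matrix (Fin b) (Fin c) ℂ)
    (hM : ∀ k l, (∃ e : ℕ, ∀ ζ : ℂ, M ζ k l = ζ ^ e) ∨ (∀ ζ : ℂ, M ζ k l = 0))
    (Cl : Matrix (Fin a) (Fin b) ℂ) (Cr : Matrix (Fin c) (Fin d) ℂ) (k : Fin a) (l : Fin d) :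
    ∃ f : MvPolynomial (Fin N) ℂ, ∀ z : Fin N → ℂ,
      (Cl * M (z j) * Cr) k l = MvPolynomial.eval z f := by
  classical
  have h : ∀ (x : Fin b) (y : Fin c), ∃ f : MvPolynomial (Fin N) ℂ,
      ∀ z : Fin N → ℂ, M (z j) x y = MvPolynomial.eval z f := by
    intro x y
    rcases hM x y with ⟨e, he⟩ | h0
    · exact ⟨(MvPolynomial.X j) ^ e, fun z => by simp [he]⟩
    · exact ⟨0, fun z => by simp [h0]⟩
  choose g hg using h
  refine ⟨∑ y, (∑ x, MvPolynomial.C (Cl k x) * g x y) * MvPolynomial.C (Cr y l), fun z => ?_⟩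
  rw [map_sum]
  rw [Matrix.mul_apply]
  refine Finset.sum_congr rfl fun y _ => ?_
  rw [_root_.map_mul, MvPolynomial.eval_C, map_sum, Matrix.mul_apply]
  congr 1
  refine Finset.sum_congr rfl fun x _ => ?_
  rw [_root_.map_mul, MvPolynomial.eval_C, hg]

theorem length_one_factorization {N m n p q : ℕ} (j : Fin N)
    (C₀ : Matrix (Fin m) (Fin p) ℂ) (C₁ : Matrix (Fin q) (Fin n) ℂ)
    (hC₀ : ‖C₀‖ < 1) (hC₁ : ‖C₁‖ < 1)
    (D₁ : ℂ → Matrix (Fin p) (Fin q) ℂ)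
    (hD₁mono : ∀ k l, (∃ e : ℕ, ∀ z : ℂ, D₁ z k l = z ^ e) ∨ (∀ z : ℂ, D₁ z k l = 0))
    (hD₁ : ∀ z : ℂ, ‖z‖ ≤ 1 → ‖D₁ z‖ ≤ 1)
    (P : (Fin N → ℂ) → Matrix (Fin m) (Fin n) ℂ)
    (hP : ∀ z : Fin N → ℂ, P z = C₀ * D₁ (z j) * C₁) :
    ∃ (δ : ℝ), 0 < δ ∧
    ∃ (R : Matrix (Fin m) (Fin m) ℂ), (R - (δ : ℂ) • (1 : Matrix (Fin m) (Fin m) ℂ)).PosSemidef ∧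
    ∃ (p₀ q₀ : ℕ) (P₀ : (Fin N → ℂ) → Matrix (Fin m) (Fin p₀) ℂ)
      (Pj : (Fin N → ℂ) → Matrix (Fin m) (Fin q₀) ℂ),
      (∀ k l, ∃ f : MvPolynomial (Fin N) ℂ, ∀ z, P₀ z k l = MvPolynomial.eval z f) ∧
      (∀ k l, ∃ f : MvPolynomial (Fin N) ℂ, ∀ z, Pj z k l = MvPolynomial.eval z f) ∧
      ∀ z w : Fin N → ℂ,
        (1 : Matrix (Fin m) (Fin m) ℂ) - P z * (P w)ᴴ =
          R + P₀ z * (P₀ w)ᴴ + (1 - z j * starRingEnd ℂ (w j)) • (Pj z * (Pj w)ᴴ) := by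
  classical
  have hC1psd : ((1 : Matrix (Fin q) (Fin q) ℂ) - C₁ * C₁ᴴ).PosSemidef := by
    have h1 := lof_smul_one_sub_posSemidef C₁
    have h2 := lof_real_smul_one_psd (c := q) (r := 1 - ‖C₁‖^2)
      (by nlinarith [norm_nonneg C₁])
    have h3 := h1.add h2
    convert h3 using 1
    push_cast
    module
  open scoped MatrixOrder in
  obtain ⟨B, hB⟩ := CStarAlgebra.nonneg_iff_eq_star_mul_self.mp hC1psd.nonneg
  rw [Matrix.star_eq_conjTranspose] at hB
  obtain ⟨E, A, Q, hQ, hAmono, hfac⟩ := lof_diag_factor D₁ hD₁mono (hD₁ 1 (by simp))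
  refine ⟨1 - ‖C₀‖^2, by nlinarith [norm_nonneg C₀],
    ((1 : Matrix (Fin m) (Fin m) ℂ) - C₀ * C₀ᴴ) + C₀ * Q * C₀ᴴ, ?_,
    q, E, fun z => C₀ * D₁ (z j) * Bᴴ, fun z => C₀ * A (z j), ?_, ?_, ?_⟩
  · have h1 := lof_smul_one_sub_posSemidef C₀
    have h2 := hQ.mul_mul_conjTranspose_same C₀
    have h3 := h1.add h2
    convert h3 using 1
    push_cast
    module
  · intro k l
    exact lof_entry_poly j D₁ hD₁mono C₀ Bᴴ k l
  · intro k l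
    have h := lof_entry_poly j A hAmono C₀ (1 : Matrix (Fin E) (Fin E) ℂ) k l
    simpa [Matrix.mul_one] using h
  · intro z w
    have hP0 : (C₀ * D₁ (z j) * Bᴴ) * (C₀ * D₁ (w j) * Bᴴ)ᴴ
        = C₀ * (D₁ (z j) * (((1 : Matrix (Fin q) (Fin q) ℂ) - C₁ * C₁ᴴ) * (D₁ (w j))ᴴ)) * C₀ᴴ := by
      rw [hB]
      simp only [conjTranspose_mul, conjTranspose_conjTranspose, Matrix.mul_assoc]
    have hPj : (C₀ * A (z j)) * (C₀ * A (w j))ᴴ = C₀ * (A (z j) * (A (w j))ᴴ) * C₀ᴴ := by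
      simp only [conjTranspose_mul, Matrix.mul_assoc]
    rw [hP z, hP w, hP0, hPj]
    have hsm : (1 - z j * starRingEnd ℂ (w j)) • (C₀ * (A (z j) * (A (w j))ᴴ) * C₀ᴴ)
        = C₀ * ((1 - z j * starRingEnd ℂ (w j)) • (A (z j) * (A (w j))ᴴ)) * C₀ᴴ := by
      rw [Matrix.mul_smul, Matrix.smul_mul]
    rw [hsm]
    have hA' : (1 - z j * starRingEnd ℂ (w j)) • (A (z j) * (A (w j))ᴴ)
        = ((1 : Matrix (Fin p) (Fin p) ℂ) - D₁ (z j) * (D₁ (w j))ᴴ) - Q := by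
      rw [hfac (z j) (w j)]
      abel
    rw [hA']
    simp only [Matrix.mul_sub, Matrix.sub_mul, Matrix.mul_add, Matrix.add_mul, Matrix.mul_one,
      Matrix.one_mul, conjTranspose_mul, Matrix.mul_assoc]
    abel
end
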